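/- Assume the MFS setup with eigenvalue bounds (H_s) and boundary-data decay |v̂(m)| ≤ C_v·ρ^{−|m|} for all m ∈ ℤ, where ρ = R² (and R > 1). Then there exists a constant C > 0, depending on R, c_s, C_s, C_v (and on ŝ(0), v̂(0)) but not on N, such that for every even integer N ≥ 2 there exists a coefficient vector α̂ ∈ ℂ^N with boundary error t(α̂) ≤ C·√N·R^{−N}. -/

import Mathlib

open scoped BigOperators ENNReal NNReal

noncomputable section

/-- The unique representative of `m` modulo `N` lying in the window `(-N/2, N/2]`. -/
def winRep (N : ℕ) (m : ℤ) : ℤ := (m + (N : ℤ) / 2 - 1) % (N : ℤ) - ((N : ℤ) / 2 - 1)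

/-- The index window `(-N/2, N/2]` as a finite set of integers. -/
def window (N : ℕ) : Finset ℤ := Finset.Icc (-(N : ℤ) / 2 + 1) ((N : ℤ) / 2)

/-- The norm `|α̂|` of a coefficient vector indexed by the window. -/
def coefNorm (N : ℕ) (a : ℤ → ℂ) : ℝ := Real.sqrt (∑ k ∈ window N, ‖a k‖ ^ 2)

/-- The boundary error norm
`t(α̂) = (2π·∑_{m∈ℤ} |(N/(2π))·ŝ(m)·α̂_{⟨m⟩_N} − v̂(m)|²)^{1/2}`, valued in `[0,∞]`. -/
def tErr (N : ℕ) (s v a : ℤ → ℂ) : ℝ≥0∞ :=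
  (ENNReal.ofReal (2 * Real.pi) *
    ∑' m : ℤ, (‖((N : ℂ) / (2 * (Real.pi : ℂ))) * s m * a (winRep N m) - v m‖₊ : ℝ≥0∞) ^ 2)
    ^ (1 / 2 : ℝ)

lemma mem_window_iff {N : ℕ} {k : ℤ} : k ∈ window N ↔ -(N:ℤ)/2 + 1 ≤ k ∧ k ≤ (N:ℤ)/2 :=
  Finset.mem_Icc

lemma winRep_add_mul {N : ℕ} (hN : 0 < N) (hN2 : (N:ℤ) % 2 = 0) {k : ℤ}
    (hk : k ∈ window N) (j : ℤ) : winRep N (k + j * N) = k := by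
  rw [mem_window_iff] at hk
  have hNZ : (0:ℤ) < (N:ℤ) := by exact_mod_cast hN
  unfold winRep
  have h1 : k + j * (N:ℤ) + (N:ℤ)/2 - 1 = (k + (N:ℤ)/2 - 1) + j * (N:ℤ) := by ring
  rw [h1, Int.add_mul_emod_self_right]
  have h2 : (k + (N:ℤ)/2 - 1) % (N:ℤ) = k + (N:ℤ)/2 - 1 :=
    Int.emod_eq_of_lt (by omega) (by omega)
  omega

lemma winRep_mem {N : ℕ} (hN : 0 < N) (hN2 : (N:ℤ) % 2 = 0) (m : ℤ) :
    winRep N m ∈ window N := by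
  have hNZ : (0:ℤ) < (N:ℤ) := by exact_mod_cast hN
  have h1 : 0 ≤ (m + (N:ℤ)/2 - 1) % (N:ℤ) := Int.emod_nonneg _ (by omega)
  have h2 : (m + (N:ℤ)/2 - 1) % (N:ℤ) < (N:ℤ) := Int.emod_lt_of_pos _ hNZ
  rw [mem_window_iff]; unfold winRep; omega

lemma winRep_eq_self {N : ℕ} (hN : 0 < N) (hN2 : (N:ℤ) % 2 = 0) {k : ℤ}
    (hk : k ∈ window N) : winRep N k = k := by
  have := winRep_add_mul hN hN2 hk 0; simpa using this

lemma winRep_decomp {N : ℕ} (hN : 0 < N) (m : ℤ) :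
    winRep N m + ((m + (N:ℤ)/2 - 1) / N) * N = m := by
  have hNZ : (0:ℤ) < (N:ℤ) := by exact_mod_cast hN
  have h3 := Int.mul_ediv_add_emod (m + (N:ℤ)/2 - 1) (N:ℤ)
  have h4 : ((m + (N:ℤ)/2 - 1) / (N:ℤ)) * (N:ℤ) = (N:ℤ) * ((m + (N:ℤ)/2 - 1) / (N:ℤ)) :=
    mul_comm _ _
  unfold winRep
  omega

lemma winRep_quot {N : ℕ} (hN : 0 < N) (hN2 : (N:ℤ) % 2 = 0) {k : ℤ}
    (hk : k ∈ window N) (j : ℤ) : (k + j * N + (N:ℤ)/2 - 1) / N = j := by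
  rw [mem_window_iff] at hk
  have hNZ : (0:ℤ) < (N:ℤ) := by exact_mod_cast hN
  have h1 : k + j * (N:ℤ) + (N:ℤ)/2 - 1 = (k + (N:ℤ)/2 - 1) + j * (N:ℤ) := by ring
  rw [h1, Int.add_mul_ediv_right _ _ (by omega : (N:ℤ) ≠ 0)]
  rw [Int.ediv_eq_zero_of_lt (by omega) (by omega)]
  ring

lemma card_window {N : ℕ} (hN : Even N) : (window N).card = N := by
  rw [Nat.even_iff] at hN
  have h2 : (N:ℤ) % 2 = 0 := by omega
  rw [window, Int.card_Icc]
  omega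

/-- The decomposition `m = k + j·N` with `k` in the window, as an equivalence. -/
def winEquiv (N : ℕ) (hN : 0 < N) (hN2 : (N:ℤ) % 2 = 0) : ({k // k ∈ window N} × ℤ) ≃ ℤ where
  toFun p := p.1.1 + p.2 * N
  invFun m := (⟨winRep N m, winRep_mem hN hN2 m⟩, (m + (N:ℤ)/2 - 1) / N)
  left_inv p := by
    ext
    · exact winRep_add_mul hN hN2 p.1.2 p.2
    · exact winRep_quot hN hN2 p.1.2 p.2
  right_inv m := winRep_decomp hN m

/-- Geometric tail bound for a `ℤ`-indexed family vanishing at `0`. -/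
lemma inner_bound (A rr : ℝ) (hA : 0 ≤ A) (hrr0 : 0 ≤ rr) (f : ℤ → ℂ)
    (hf0 : f 0 = 0) (hf : ∀ j : ℤ, j ≠ 0 → ‖f j‖ ≤ A * rr ^ j.natAbs) :
    ∑' j : ℤ, (‖f j‖₊ : ℝ≥0∞) ^ 2
      ≤ 2 * ((ENNReal.ofReal (A ^ 2) * ENNReal.ofReal (rr ^ 2)) *
          (1 - ENNReal.ofReal (rr ^ 2))⁻¹) := by
  set c : ℝ≥0∞ := ENNReal.ofReal (A ^ 2) with hc
  set q : ℝ≥0∞ := ENNReal.ofReal (rr ^ 2) with hq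
  have key : ∀ j : ℤ, j ≠ 0 → (‖f j‖₊ : ℝ≥0∞) ^ 2 ≤ (c * q) * q ^ (j.natAbs - 1) := by
    intro j hj
    have hja : 1 ≤ j.natAbs := by omega
    have h1 : (‖f j‖₊ : ℝ≥0∞) ≤ ENNReal.ofReal (A * rr ^ j.natAbs) := by
      rw [← enorm_eq_nnnorm, ← ofReal_norm]
      exact ENNReal.ofReal_le_ofReal (hf j hj)
    have h2 := pow_le_pow_left₀ (zero_le) h1 2
    refine h2.trans_eq ?_
    rw [← ENNReal.ofReal_pow (by positivity)]
    have h3 : (A * rr ^ j.natAbs) ^ 2 = A ^ 2 * (rr ^ 2) * (rr ^ 2) ^ (j.natAbs - 1) := by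
      have hexp : j.natAbs * 2 = 2 + 2 * (j.natAbs - 1) := by omega
      rw [mul_pow, ← pow_mul, hexp, pow_add, pow_mul, ← mul_assoc]
    rw [h3, ENNReal.ofReal_mul (by positivity), ENNReal.ofReal_mul (by positivity),
      ENNReal.ofReal_pow (by positivity : (0:ℝ) ≤ rr ^ 2)]
  rw [tsum_of_nat_of_neg_add_one ENNReal.summable ENNReal.summable]
  have hgeo : ∑' n : ℕ, (c * q) * q ^ n = (c * q) * (1 - q)⁻¹ := by
    rw [ENNReal.tsum_mul_left, ENNReal.tsum_geometric]
  have hpos : ∑' n : ℕ, (‖f ((n : ℤ))‖₊ : ℝ≥0∞) ^ 2 ≤ (c * q) * (1 - q)⁻¹ := by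
    rw [tsum_eq_zero_add' ENNReal.summable]
    simp only [Nat.cast_zero, hf0]
    simp only [nnnorm_zero, ENNReal.coe_zero, ne_eq, OfNat.ofNat_ne_zero,
      not_false_eq_true, zero_pow, zero_add]
    rw [← hgeo]
    apply ENNReal.summable.tsum_le_tsum _ ENNReal.summable
    intro n
    have := key ((n : ℤ) + 1) (by omega)
    have hna : ((n : ℤ) + 1).natAbs - 1 = n := by omega
    rwa [hna] at this
  have hneg : ∑' n : ℕ, (‖f (-((n : ℤ) + 1))‖₊ : ℝ≥0∞) ^ 2 ≤ (c * q) * (1 - q)⁻¹ := by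
    rw [← hgeo]
    apply ENNReal.summable.tsum_le_tsum _ ENNReal.summable
    intro n
    have := key (-((n : ℤ) + 1)) (by omega)
    have hna : (-((n : ℤ) + 1)).natAbs - 1 = n := by omega
    rwa [hna] at this
  calc (∑' n : ℕ, (‖f ((n : ℤ))‖₊ : ℝ≥0∞) ^ 2) + ∑' n : ℕ, (‖f (-((n : ℤ) + 1))‖₊ : ℝ≥0∞) ^ 2
      ≤ (c * q) * (1 - q)⁻¹ + (c * q) * (1 - q)⁻¹ := add_le_add hpos hneg
    _ = 2 * ((c * q) * (1 - q)⁻¹) := by ring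

/-- MFS convergence on the unit disc, case `ρ = R²`: rate `√N·R^{-N}`. -/
theorem mfs_convergence_rho_eq_Rsq
    (R ρ cs Cs Cv : ℝ) (hR : 1 < R) (hρ1 : 1 < ρ) (hρ2 : ρ = R ^ 2)
    (hcs : 0 < cs) (hcsCs : cs ≤ Cs) (hCv : 0 < Cv)
    (s v : ℤ → ℂ)
    (hs0 : s 0 ≠ 0) (hs0' : ‖s 0‖ ≤ Cs)
    (hsl : ∀ m : ℤ, m ≠ 0 → cs / |(m : ℝ)| * R ^ (-|m|) ≤ ‖s m‖)
    (hsu : ∀ m : ℤ, m ≠ 0 → ‖s m‖ ≤ Cs / |(m : ℝ)| * R ^ (-|m|))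
    (hv : ∀ m : ℤ, ‖v m‖ ≤ Cv * ρ ^ (-|m|)) :
    ∃ C : ℝ, 0 < C ∧ ∀ N : ℕ, Even N → 2 ≤ N →
      ∃ a : ℤ → ℂ,
        tErr N s v a ≤ ENNReal.ofReal (C * Real.sqrt N * R ^ (-(N : ℝ))) := by
  have hR0 : (0:ℝ) < R := by linarith
  set r := R⁻¹ with hrdef
  have hr0 : 0 < r := by positivity
  have hr1 : r < 1 := by rw [hrdef]; exact inv_lt_one_of_one_lt₀ hR
  have hzpow : ∀ m : ℤ, R ^ (-|m|) = r ^ m.natAbs := by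
    intro m
    rw [Int.abs_eq_natAbs, zpow_neg, zpow_natCast, ← inv_pow]
  have hCs : (0:ℝ) < Cs := lt_of_lt_of_le hcs hcsCs
  have hvr : ∀ m : ℤ, ‖v m‖ ≤ Cv * r ^ (2 * m.natAbs) := by
    intro m
    have := hv m
    rwa [hρ2, show (R^2 : ℝ) ^ (-|m|) = r ^ (2 * m.natAbs) from ?_] at this
    rw [Int.abs_eq_natAbs, zpow_neg, zpow_natCast, ← inv_pow, pow_mul]
    congr 1
    rw [hrdef, inv_pow]
  have hs0pos : 0 < ‖s 0‖ := norm_pos_iff.mpr hs0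
  have hsne : ∀ m : ℤ, s m ≠ 0 := by
    intro m
    rcases eq_or_ne m 0 with rfl | hm
    · exact hs0
    · have habs : (0:ℝ) < |(m : ℝ)| := abs_pos.mpr (Int.cast_ne_zero.mpr hm)
      have hlb : (0:ℝ) < cs / |(m : ℝ)| * R ^ (-|m|) := by positivity
      exact norm_pos_iff.mp (lt_of_lt_of_le hlb (hsl m hm))
  set M : ℝ := max (Cv / cs) (Cv / ‖s 0‖) with hMdef
  have hM : 0 < M := lt_max_of_lt_left (by positivity)
  set A : ℝ := 2 * Cs * M + Cv with hAdef
  have hA : 0 < A := by positivity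
  have hr4 : r ^ 4 < 1 := pow_lt_one₀ hr0.le hr1 (by norm_num)
  have hr4' : (0:ℝ) < 1 - r ^ 4 := by linarith
  set D : ℝ := 2 * A ^ 2 * (1 - r ^ 4)⁻¹ with hDdef
  have hD : 0 < D := by positivity
  refine ⟨Real.sqrt (2 * Real.pi * D), Real.sqrt_pos.mpr (by positivity), ?_⟩
  intro N hNe hN2le
  have hN0 : 0 < N := by omega
  have hN2 : (N:ℤ) % 2 = 0 := by rw [Nat.even_iff] at hNe; omega
  set a : ℤ → ℂ := fun k => ((2 * Real.pi : ℝ) : ℂ) / (N : ℂ) * (v k / s k) with hadef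
  refine ⟨a, ?_⟩
  have hπC : ((Real.pi : ℝ) : ℂ) ≠ 0 := by exact_mod_cast Real.pi_ne_zero
  have hNC : (N : ℂ) ≠ 0 := by exact_mod_cast (Nat.cast_ne_zero (R := ℂ)).mpr (by omega)
  set e : ℤ → ℂ := fun m => ((N : ℂ) / (2 * (Real.pi : ℂ))) * s m * a (winRep N m) - v m
    with hedef
  -- the error vanishes on the window
  have h0 : ∀ k ∈ window N, e k = 0 := by
    intro k hk
    have hsk : s k ≠ 0 := hsne k
    simp only [hedef, hadef, winRep_eq_self hN0 hN2 hk]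
    push_cast
    field_simp
    ring
  -- bound on `v k / s k` for `k` in the window
  have hvs : ∀ k ∈ window N, ‖v k / s k‖ ≤ M * N * r ^ k.natAbs := by
    intro k hk
    rw [mem_window_iff] at hk
    have hkN : 2 * k.natAbs ≤ N := by omega
    rcases eq_or_ne k 0 with rfl | hk0
    · rw [norm_div]
      have h1 : ‖v 0‖ / ‖s 0‖ ≤ Cv / ‖s 0‖ := by
        have hv0 : ‖v 0‖ ≤ Cv := by simpa using hvr 0
        gcongr
      have hN1 : (1:ℝ) ≤ (N:ℝ) := by exact_mod_cast hN0
      simp only [Int.natAbs_zero, pow_zero, mul_one]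
      calc ‖v 0‖ / ‖s 0‖ ≤ Cv / ‖s 0‖ := h1
        _ ≤ M := le_max_right _ _
        _ ≤ M * (N:ℝ) := le_mul_of_one_le_right hM.le hN1
    · have hka : 1 ≤ k.natAbs := by omega
      have hkaR : (0:ℝ) < (k.natAbs:ℝ) := by exact_mod_cast hka
      have habs : |(k:ℝ)| = (k.natAbs : ℝ) := by
        rw [Nat.cast_natAbs]; push_cast; rfl
      have hns : cs / (k.natAbs:ℝ) * r ^ k.natAbs ≤ ‖s k‖ := by
        have := hsl k hk0
        rwa [hzpow k, habs] at this
      have hlb : (0:ℝ) < cs / (k.natAbs:ℝ) * r ^ k.natAbs := by positivity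
      rw [norm_div]
      have h1 : ‖v k‖ / ‖s k‖ ≤ (Cv * r ^ (2 * k.natAbs)) / (cs / (k.natAbs:ℝ) * r ^ k.natAbs) :=
        div_le_div₀ (by positivity) (hvr k) hlb hns
      have h2 : (Cv * r ^ (2 * k.natAbs)) / (cs / (k.natAbs:ℝ) * r ^ k.natAbs)
          = (Cv / cs) * (k.natAbs:ℝ) * r ^ k.natAbs := by
        rw [two_mul, pow_add]
        field_simp
      rw [h2] at h1
      refine h1.trans ?_
      have hNR : (k.natAbs:ℝ) ≤ (N:ℝ) := by exact_mod_cast (by omega : k.natAbs ≤ N)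
      have hMcv : Cv / cs ≤ M := le_max_left _ _
      have h3 : (Cv / cs) * (k.natAbs:ℝ) ≤ M * (N:ℝ) :=
        mul_le_mul hMcv hNR hkaR.le (le_trans (by positivity) hMcv)
      exact mul_le_mul_of_nonneg_right h3 (by positivity)
  -- the key off-window bound
  have hbig : ∀ k ∈ window N, ∀ j : ℤ, j ≠ 0 →
      ‖e (k + j * N)‖ ≤ A * (r ^ N) ^ j.natAbs := by
    intro k hk j hj
    set m : ℤ := k + j * N with hm
    have hwr : winRep N m = k := winRep_add_mul hN0 hN2 hk j
    have hsk : s k ≠ 0 := hsne k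
    have hsimp : e m = s m * (v k / s k) - v m := by
      simp only [hedef, hadef, hwr]
      congr 1
      push_cast
      field_simp
    have hja : 1 ≤ j.natAbs := by omega
    have hP1 : N * j.natAbs ≤ m.natAbs + k.natAbs := by
      have h6 : (m - k).natAbs ≤ m.natAbs + k.natAbs := Int.natAbs_sub_le m k
      have h5 : m - k = j * (N:ℤ) := by rw [hm]; ring
      rw [h5, Int.natAbs_mul, Int.natAbs_natCast, Nat.mul_comm] at h6
      exact h6
    rw [mem_window_iff] at hk
    have hkN : 2 * k.natAbs ≤ N := by omega
    have hP2 : N ≤ N * j.natAbs := Nat.le_mul_of_pos_right N (by omega)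
    have hma : N ≤ 2 * m.natAbs := by omega
    have hma0 : 0 < m.natAbs := by omega
    have hm0 : m ≠ 0 := by omega
    have hmaR : (0:ℝ) < (m.natAbs:ℝ) := by exact_mod_cast hma0
    have habs : |(m:ℝ)| = (m.natAbs : ℝ) := by
      rw [Nat.cast_natAbs]; push_cast; rfl
    have hsm : ‖s m‖ ≤ Cs / (m.natAbs:ℝ) * r ^ m.natAbs := by
      have := hsu m hm0
      rwa [hzpow m, habs] at this
    have hw : ‖v k / s k‖ ≤ M * N * r ^ k.natAbs := hvs k (mem_window_iff.mpr hk)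
    set P : ℕ := N * j.natAbs with hPdef
    have t1 : ‖s m‖ * ‖v k / s k‖ ≤ 2 * (Cs * M) * r ^ P := by
      have h1 : ‖s m‖ * ‖v k / s k‖
          ≤ (Cs / (m.natAbs:ℝ) * r ^ m.natAbs) * (M * N * r ^ k.natAbs) :=
        mul_le_mul hsm hw (norm_nonneg _) (by positivity)
      refine h1.trans ?_
      have h2 : (Cs / (m.natAbs:ℝ) * r ^ m.natAbs) * (M * N * r ^ k.natAbs)
          = Cs * M * ((N:ℝ) / (m.natAbs:ℝ)) * r ^ (m.natAbs + k.natAbs) := by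
        rw [pow_add]; field_simp
      rw [h2]
      have h3 : (N:ℝ) / (m.natAbs:ℝ) ≤ 2 := by
        rw [div_le_iff₀ hmaR]
        exact_mod_cast hma
      have h4 : r ^ (m.natAbs + k.natAbs) ≤ r ^ P :=
        pow_le_pow_of_le_one hr0.le hr1.le hP1
      calc Cs * M * ((N:ℝ)/(m.natAbs:ℝ)) * r ^ (m.natAbs + k.natAbs)
          ≤ Cs * M * 2 * r ^ P :=
            mul_le_mul (mul_le_mul_of_nonneg_left h3 (by positivity)) h4
              (by positivity) (by positivity)
        _ = 2 * (Cs * M) * r ^ P := by ring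
    have t2 : ‖v m‖ ≤ Cv * r ^ P := by
      refine (hvr m).trans ?_
      exact mul_le_mul_of_nonneg_left
        (pow_le_pow_of_le_one hr0.le hr1.le (by omega)) hCv.le
    have hfinal : ‖e m‖ ≤ A * r ^ P := by
      rw [hsimp]
      refine (norm_sub_le _ _).trans ?_
      rw [norm_mul]
      have hsum := add_le_add t1 t2
      have hAr : 2 * (Cs * M) * r ^ P + Cv * r ^ P = A * r ^ P := by
        rw [hAdef]; ring
      linarith
    rwa [hPdef, pow_mul] at hfinal
  -- now assemble the tsum bound
  set E := winEquiv N hN0 hN2 with hE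
  set F : ℤ → ℝ≥0∞ := fun m => (‖e m‖₊ : ℝ≥0∞) ^ 2 with hF
  have hT : ∑' m : ℤ, F m = ∑' p : ({k // k ∈ window N} × ℤ), F (E p) :=
    (E.tsum_eq F).symm
  set B : ℝ≥0∞ := ENNReal.ofReal (D * (r ^ N) ^ 2) with hB
  have hinner : ∀ k : {k // k ∈ window N}, ∑' j : ℤ, F (E (k, j)) ≤ B := by
    intro k
    have h1 : ∀ j : ℤ, F (E (k, j)) = (‖e ((k:ℤ) + j * N)‖₊ : ℝ≥0∞) ^ 2 := fun j => rfl
    have h2 := inner_bound A (r ^ N) hA.le (by positivity)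
      (fun j => e ((k:ℤ) + j * N))
      (by simpa using h0 (k:ℤ) k.2)
      (fun j hj => hbig (k:ℤ) k.2 j hj)
    simp only [h1]
    refine h2.trans ?_
    -- bound the geometric factor by the constant D
    have hq4 : ENNReal.ofReal ((r ^ N) ^ 2) ≤ ENNReal.ofReal (r ^ 4) := by
      apply ENNReal.ofReal_le_ofReal
      rw [← pow_mul]
      exact pow_le_pow_of_le_one hr0.le hr1.le (by omega)
    have hsub : ENNReal.ofReal (1 - r ^ 4) ≤ 1 - ENNReal.ofReal ((r ^ N) ^ 2) := by
      rw [ENNReal.ofReal_sub _ (by positivity), ENNReal.ofReal_one]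
      exact tsub_le_tsub_left hq4 1
    have hinv : (1 - ENNReal.ofReal ((r ^ N) ^ 2))⁻¹ ≤ ENNReal.ofReal ((1 - r ^ 4)⁻¹) := by
      rw [ENNReal.ofReal_inv_of_pos hr4']
      exact ENNReal.inv_le_inv' hsub
    calc 2 * ((ENNReal.ofReal (A ^ 2) * ENNReal.ofReal ((r ^ N) ^ 2)) *
            (1 - ENNReal.ofReal ((r ^ N) ^ 2))⁻¹)
        ≤ 2 * ((ENNReal.ofReal (A ^ 2) * ENNReal.ofReal ((r ^ N) ^ 2)) *
            ENNReal.ofReal ((1 - r ^ 4)⁻¹)) := by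
          gcongr
      _ = B := by
          rw [hB, ← ENNReal.ofReal_mul (by positivity), ← ENNReal.ofReal_mul (by positivity),
            ← ENNReal.ofReal_ofNat 2, ← ENNReal.ofReal_mul (by norm_num)]
          congr 1
          rw [hDdef]
          ring
  have hTle : ∑' m : ℤ, F m ≤ ENNReal.ofReal ((N:ℝ) * (D * (r ^ N) ^ 2)) := by
    rw [hT, ENNReal.tsum_prod']
    calc ∑' k : {k // k ∈ window N}, ∑' j : ℤ, F (E (k, j))
        ≤ ∑' _k : {k // k ∈ window N}, B := ENNReal.tsum_le_tsum hinner
      _ = (window N).card • B := by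
          rw [tsum_fintype]
          simp [Finset.sum_const, Finset.card_univ]
      _ = ENNReal.ofReal ((N:ℝ) * (D * (r ^ N) ^ 2)) := by
          rw [card_window hNe, nsmul_eq_mul, hB,
            ← ENNReal.ofReal_natCast N, ← ENNReal.ofReal_mul (by positivity)]
  -- final computation
  have hX : (0:ℝ) < 2 * Real.pi * ((N:ℝ) * (D * (r ^ N) ^ 2)) := by
    have : (0:ℝ) < (N:ℝ) := by exact_mod_cast hN0
    positivity
  have hstep : tErr N s v a ≤
      (ENNReal.ofReal (2 * Real.pi * ((N:ℝ) * (D * (r ^ N) ^ 2)))) ^ (1/2 : ℝ) := by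
    rw [tErr]
    apply ENNReal.rpow_le_rpow _ (by norm_num)
    calc ENNReal.ofReal (2 * Real.pi) * ∑' m : ℤ, (‖((N : ℂ) / (2 * (Real.pi : ℂ))) * s m *
            a (winRep N m) - v m‖₊ : ℝ≥0∞) ^ 2
        = ENNReal.ofReal (2 * Real.pi) * ∑' m : ℤ, F m := rfl
      _ ≤ ENNReal.ofReal (2 * Real.pi) * ENNReal.ofReal ((N:ℝ) * (D * (r ^ N) ^ 2)) := by
          gcongr
      _ = ENNReal.ofReal (2 * Real.pi * ((N:ℝ) * (D * (r ^ N) ^ 2))) := by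
          rw [← ENNReal.ofReal_mul (by positivity)]
  refine hstep.trans ?_
  rw [ENNReal.ofReal_rpow_of_pos hX]
  apply ENNReal.ofReal_le_ofReal
  rw [← Real.sqrt_eq_rpow]
  have harr : 2 * Real.pi * ((N:ℝ) * (D * (r ^ N) ^ 2))
      = (2 * Real.pi * D) * (N:ℝ) * (r ^ N) ^ 2 := by ring
  rw [harr, Real.sqrt_mul (by positivity) ((r ^ N) ^ 2),
    Real.sqrt_mul (by positivity) (N:ℝ), Real.sqrt_sq (by positivity)]
  have hRN : R ^ (-(N:ℝ)) = r ^ N := by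
    rw [Real.rpow_neg hR0.le, Real.rpow_natCast, hrdef, inv_pow]
  rw [hRN, mul_assoc, mul_assoc]

end
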